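/- Let N = p_1 * p_2 * ... * p_t be a squarefree integer which is a product of t >= 3 distinct primes. Set g(N) = gcd(N + (-1)^{t-1}, p_1^2 - 1, ..., p_t^2 - 1) and, for each index i, set s_i(N) = (p_i + 1) * prod_{j != i} (p_j - 1). Then 2 * g(N) divides s_i(N) for every i with 1 <= i <= t. -/

import Mathlib

open Finset in

private lemma aux_prod_sq_one {R : Type*} [CommRing R] {t : ℕ} (x : Fin t → R)
    (hx : ∀ j, x j ^ 2 = 1) (i : Fin t) :
    (∏ j, x j) * ((x i + 1) * ∏ j ∈ univ.erase i, (x j - 1)) =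
      (-1) ^ (t - 1) * ((x i + 1) * ∏ j ∈ univ.erase i, (x j - 1)) := by
  have h1 : ∏ j, x j = x i * ∏ j ∈ univ.erase i, x j :=
    (Finset.mul_prod_erase univ x (mem_univ i)).symm
  have hcard : (univ.erase i).card = t - 1 := by
    rw [Finset.card_erase_of_mem (mem_univ i), card_univ, Fintype.card_fin]
  calc (∏ j, x j) * ((x i + 1) * ∏ j ∈ univ.erase i, (x j - 1))
      = (x i * (x i + 1)) * ∏ j ∈ univ.erase i, (x j * (x j - 1)) := by
        rw [h1, Finset.prod_mul_distrib]; ring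
    _ = (x i + 1) * ∏ j ∈ univ.erase i, ((-1) * (x j - 1)) := by
        rw [show x i * (x i + 1) = x i + 1 by linear_combination hx i]
        congr 1
        exact Finset.prod_congr rfl fun j _ => by linear_combination hx j
    _ = (-1) ^ (t - 1) * ((x i + 1) * ∏ j ∈ univ.erase i, (x j - 1)) := by
        rw [Finset.prod_mul_distrib, Finset.prod_const, hcard]; ring


open Finset in
private lemma aux_dich {a : ℕ} (ha : 2 ≤ a) {x : ℤ} (hx : Odd x)
    (h : (2 : ℤ) ^ a ∣ x ^ 2 - 1) :
    (2 : ℤ) ^ (a - 1) ∣ x - 1 ∨ (2 : ℤ) ^ (a - 1) ∣ x + 1 := by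
  obtain ⟨b, rfl⟩ := hx
  have h4 : (2 : ℤ) ^ 2 * (2 : ℤ) ^ (a - 2) = 2 ^ a := by
    rw [← pow_add]; congr 1; omega
  have h1 : (2 : ℤ) ^ (a - 2) ∣ b * (b + 1) := by
    have : (2 : ℤ) ^ 2 * (2 : ℤ) ^ (a - 2) ∣ (2:ℤ)^2 * (b * (b + 1)) := by
      rw [h4]; convert h using 1; ring
    exact (mul_dvd_mul_iff_left (by norm_num : (2:ℤ)^2 ≠ 0)).mp this
  have hsplit : (2 : ℤ) ^ (a - 2) ∣ b ∨ (2 : ℤ) ^ (a - 2) ∣ b + 1 := by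
    rcases Int.even_or_odd b with he | ho
    · left
      refine Prime.pow_dvd_of_dvd_mul_right Int.prime_two _ ?_ h1
      rcases he with ⟨c, rfl⟩
      intro hdvd
      omega
    · right
      refine Prime.pow_dvd_of_dvd_mul_left Int.prime_two _ ?_ h1
      rcases ho with ⟨c, rfl⟩
      intro hdvd
      omega
  have hstep : (2:ℤ) * (2:ℤ)^(a-2) = 2 ^ (a-1) := by
    rw [← pow_succ']; congr 1; omega
  rcases hsplit with hb | hb
  · left; rw [← hstep]
    obtain ⟨c, rfl⟩ := hb
    exact ⟨c, by ring⟩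
  · right; rw [← hstep]
    obtain ⟨c, hc⟩ := hb
    exact ⟨c, by linarith [hc]⟩


/-- Lemma 3.20: Let `N = p_1 ⋯ p_t` be squarefree with `t ≥ 3` distinct prime factors.
With `g(N) = gcd(N + (-1)^(t-1), p_i^2 - 1 : 1 ≤ i ≤ t)` and
`s_i(N) = (p_i + 1) * ∏_{j ≠ i} (p_j - 1)`, we have `2 * g(N) ∣ s_i(N)` for all `i`. -/
theorem two_mul_gcd_dvd (t : ℕ) (ht : 3 ≤ t) (p : Fin t → ℕ)
    (hp : ∀ i, (p i).Prime) (hinj : Function.Injective p) (i : Fin t) :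
    2 * gcd ((∏ j, (p j : ℤ)) + (-1) ^ (t - 1))
        (Finset.univ.gcd fun j => (p j : ℤ) ^ 2 - 1) ∣
      ((p i : ℤ) + 1) * ∏ j ∈ Finset.univ.erase i, ((p j : ℤ) - 1) := by
  set N : ℤ := ∏ j, (p j : ℤ) with hNdef
  set s : ℤ := ((p i : ℤ) + 1) * ∏ j ∈ Finset.univ.erase i, ((p j : ℤ) - 1) with hsdef
  set G : ℤ := gcd (N + (-1)^(t-1)) (Finset.univ.gcd fun j => (p j:ℤ)^2 - 1) with hGdef
  have hg1 : G ∣ N + (-1)^(t-1) := gcd_dvd_left _ _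
  have hg2 : ∀ j, G ∣ (p j:ℤ)^2 - 1 := fun j =>
    dvd_trans (gcd_dvd_right _ _) (Finset.gcd_dvd (Finset.mem_univ j))
  -- G as a natural number
  set n : ℕ := Int.gcd (N + (-1)^(t-1)) (Finset.univ.gcd fun j => (p j:ℤ)^2 - 1) with hndef
  have hGn : (n : ℤ) = G := Int.coe_gcd _ _
  -- N is large
  have hN2 : (2:ℤ)^t ≤ N := by
    rw [show (2:ℤ)^t = ∏ _j : Fin t, (2:ℤ) by
      rw [Finset.prod_const, Finset.card_univ, Fintype.card_fin], hNdef]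
    refine Finset.prod_le_prod (fun j _ => by norm_num) (fun j _ => ?_)
    exact_mod_cast (hp j).two_le
  have hNbig : (8:ℤ) ≤ N := le_trans (by
    calc (8:ℤ) = 2^3 := by norm_num
    _ ≤ 2^t := pow_le_pow_right₀ (by norm_num) ht) hN2
  have hεval : (-1:ℤ)^(t-1) = 1 ∨ (-1:ℤ)^(t-1) = -1 := neg_one_pow_eq_or ℤ _
  have hn0 : n ≠ 0 := by
    intro h0
    have hG0 : G = 0 := by rw [← hGn, h0]; norm_num
    have : N + (-1:ℤ)^(t-1) = 0 := zero_dvd_iff.mp (hG0 ▸ hg1)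
    rcases hεval with h | h <;> rw [h] at this <;> linarith
  -- erase card
  have hcard : (Finset.univ.erase i).card = t - 1 := by
    rw [Finset.card_erase_of_mem (Finset.mem_univ i), Finset.card_univ, Fintype.card_fin]
  have hcard2 : 1 < (Finset.univ.erase i).card := by omega
  -- G divides 2 * s
  have hG2s : (n : ℤ) ∣ 2 * s := by
    have hx : ∀ j, ((p j : ZMod n))^2 = 1 := by
      intro j
      have h := hg2 j
      rw [← hGn, ← ZMod.intCast_zmod_eq_zero_iff_dvd] at h
      push_cast at h
      linear_combination h
    have key := aux_prod_sq_one (fun j => ((p j : ℕ) : ZMod n)) hx i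
    have hNeps : (∏ j, ((p j : ℕ) : ZMod n)) + (-1:ZMod n)^(t-1) = 0 := by
      have h := hg1
      rw [← hGn, ← ZMod.intCast_zmod_eq_zero_iff_dvd, hNdef] at h
      push_cast at h
      exact h
    have heps2 : ((-1:ZMod n)^(t-1))^2 = 1 := by
      rw [← pow_mul, mul_comm, pow_mul]; norm_num
    have main : ∀ sc : ZMod n,
        (∏ j, ((p j : ℕ) : ZMod n)) * sc = (-1:ZMod n)^(t-1) * sc → 2 * sc = 0 := by
      intro sc hk
      linear_combination (-((-1:ZMod n)^(t-1)))*hk + ((-1:ZMod n)^(t-1))*sc*hNeps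
        - 2*sc*heps2
    rw [← ZMod.intCast_zmod_eq_zero_iff_dvd, hsdef]
    push_cast
    exact main _ key
  -- decomposition of n into 2-power and odd part
  set a : ℕ := n.factorization 2 with hadef
  set m : ℕ := n / 2 ^ a with hmdef
  have hnm : 2 ^ a * m = n := Nat.ordProj_mul_ordCompl_eq_self n 2
  have hm2 : ¬ 2 ∣ m := Nat.not_dvd_ordCompl Nat.prime_two hn0
  have hpow_n : (2:ℤ)^a ∣ (n:ℤ) := by
    have : (2^a : ℕ) ∣ n := ⟨m, hnm.symm⟩
    exact_mod_cast Int.natCast_dvd_natCast.mpr this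
  -- odd part divides s
  have hms : ((m:ℕ):ℤ) ∣ s := by
    have h1 : ((m:ℕ):ℤ) ∣ 2 * s := by
      refine dvd_trans ?_ hG2s
      exact_mod_cast Int.natCast_dvd_natCast.mpr ⟨2^a, by rw [← hnm]; ring⟩
    have hcop : IsCoprime ((m:ℕ):ℤ) (2:ℤ) := by
      have h2 : Nat.Coprime m 2 :=
        ((Nat.Prime.coprime_iff_not_dvd Nat.prime_two).mpr hm2).symm
      have := Nat.isCoprime_iff_coprime.mpr h2
      push_cast at this; exact this
    exact hcop.dvd_of_dvd_mul_left h1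
  -- generic small facts
  have hdvd_s_of : ∀ j ∈ Finset.univ.erase i, ((p j:ℤ) - 1) ∣ s := fun j hj =>
    Dvd.dvd.mul_left (Finset.dvd_prod_of_mem _ hj) _
  have hodd_sub : ∀ j, Odd (p j) → (2:ℤ) ∣ (p j:ℤ) - 1 := by
    rintro j ⟨c, hc⟩
    exact ⟨c, by push_cast [hc]; ring⟩
  have hodd_add : ∀ j, Odd (p j) → (2:ℤ) ∣ (p j:ℤ) + 1 := by
    rintro j ⟨c, hc⟩
    exact ⟨c + 1, by push_cast [hc]; ring⟩
  -- the 2-power part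
  have h2pow : (2:ℤ)^(a+1) ∣ s := by
    rcases Nat.eq_zero_or_pos a with ha0 | ha1
    · rw [ha0, pow_one]
      by_cases hpi2 : p i = 2
      · obtain ⟨j, hj⟩ : (Finset.univ.erase i).Nonempty := Finset.card_pos.mp (by omega)
        have hji : j ≠ i := Finset.ne_of_mem_erase hj
        have hoddj : Odd (p j) := (hp j).odd_of_ne_two (fun h => hji (hinj (h.trans hpi2.symm)))
        exact dvd_trans (hodd_sub j hoddj) (hdvd_s_of j hj)
      · rw [hsdef]
        exact dvd_trans (hodd_add i ((hp i).odd_of_ne_two hpi2)) (dvd_mul_right _ _)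
    · -- a ≥ 1 : all primes odd
      have hodd : ∀ j, Odd (p j) := by
        intro j
        refine (hp j).odd_of_ne_two ?_
        intro h2
        have hd2 : (2:ℤ) ∣ (p j:ℤ)^2 - 1 := by
          refine dvd_trans (dvd_trans ?_ hpow_n) (hGn ▸ hg2 j)
          exact dvd_pow_self 2 (by omega)
        rw [h2] at hd2
        norm_num at hd2
      have hex : ∃ j ∈ Finset.univ.erase i, (2:ℤ)^a ∣ ((p i:ℤ)+1) * ((p j:ℤ)-1) := by
        by_cases ha2 : a ≤ 2
        · obtain ⟨j, hj⟩ : (Finset.univ.erase i).Nonempty := Finset.card_pos.mp (by omega)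
          refine ⟨j, hj, ?_⟩
          refine dvd_trans (pow_dvd_pow 2 ha2) ?_
          rw [show ((2:ℤ)^2) = 2 * 2 by norm_num]
          exact mul_dvd_mul (hodd_add i (hodd i)) (hodd_sub j (hodd j))
        · push_neg at ha2
          have ha3 : 3 ≤ a := ha2
          clear ha2
          have hdich : ∀ j, (2:ℤ)^(a-1) ∣ (p j:ℤ) - 1 ∨ (2:ℤ)^(a-1) ∣ (p j:ℤ) + 1 := by
            intro j
            refine aux_dich (by omega) ?_ ?_
            · exact_mod_cast hodd j
            · exact dvd_trans (dvd_trans (pow_dvd_pow 2 (by omega : a ≤ a)) hpow_n)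
                (hGn ▸ hg2 j)
          set K : ℕ := 2^(a-1) with hKdef
          have hKint : ((K:ℕ):ℤ) = (2:ℤ)^(a-1) := by rw [hKdef]; push_cast; ring
          have hK4 : (4:ℕ) ≤ K := by
            calc (4:ℕ) = 2^2 := by norm_num
            _ ≤ 2^(a-1) := Nat.pow_le_pow_right (by norm_num) (by omega)
          have hKn : (K:ℤ) ∣ (n:ℤ) := by
            refine dvd_trans ?_ hpow_n
            rw [hKint]
            exact pow_dvd_pow 2 (by omega)
          classical
          set δ : Fin t → ℤ := fun j => if (2:ℤ)^(a-1) ∣ (p j:ℤ) - 1 then 1 else -1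
            with hδdef
          have hδval : ∀ j, δ j = 1 ∨ δ j = -1 := by
            intro j; simp only [hδdef]; split
            · exact Or.inl rfl
            · exact Or.inr rfl
          have hδ1 : ∀ j, δ j = 1 → (2:ℤ)^(a-1) ∣ (p j:ℤ) - 1 := by
            intro j h1
            by_contra hc
            simp only [hδdef, if_neg hc] at h1
            norm_num at h1
          have hδm1 : ∀ j, δ j ≠ 1 → (2:ℤ)^(a-1) ∣ (p j:ℤ) + 1 := by
            intro j h1
            refine (hdich j).resolve_left fun hc => h1 ?_
            simp only [hδdef, if_pos hc]
          have hKd : ∀ j, (K:ℤ) ∣ (p j:ℤ) - δ j := by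
            intro j
            rw [hKint]
            by_cases hc : (2:ℤ)^(a-1) ∣ (p j:ℤ) - 1
            · simpa only [hδdef, if_pos hc] using hc
            · have h2 := (hdich j).resolve_left hc
              simp only [hδdef, if_neg hc]
              simpa using h2
          have hprodK : (K:ℤ) ∣ (∏ j, δ j) + (-1:ℤ)^(t-1) := by
            rw [← ZMod.intCast_zmod_eq_zero_iff_dvd]
            have hc1 : ∀ j, ((δ j : ℤ) : ZMod K) = (((p j : ℕ) : ℤ) : ZMod K) := by
              intro j
              have h0 : (((p j:ℤ) - δ j : ℤ) : ZMod K) = 0 := by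
                rw [ZMod.intCast_zmod_eq_zero_iff_dvd]; exact hKd j
              push_cast at h0 ⊢
              linear_combination -h0
            have h2 : ((N + (-1:ℤ)^(t-1) : ℤ) : ZMod K) = 0 := by
              rw [ZMod.intCast_zmod_eq_zero_iff_dvd]
              exact dvd_trans hKn (hGn ▸ hg1)
            rw [hNdef] at h2
            push_cast at h2 ⊢
            rw [show (∏ j, ((δ j : ℤ) : ZMod K)) = ∏ j, ((p j : ℕ) : ZMod K) from
              Finset.prod_congr rfl fun j _ => by rw [hc1 j]; push_cast; ring]
            exact h2
          have hprodval : (∏ j, δ j) = 1 ∨ (∏ j, δ j) = -1 := by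
            have hsq : (∏ j, δ j) * (∏ j, δ j) = 1 := by
              rw [← Finset.prod_mul_distrib]
              refine Finset.prod_eq_one fun j _ => ?_
              rcases hδval j with h | h <;> rw [h] <;> norm_num
            exact Int.isUnit_iff.mp (IsUnit.of_mul_eq_one _ hsq)
          have hK2 : ¬ ((K:ℤ) ∣ 2) := by
            intro h
            have h5 := Int.le_of_dvd (by norm_num) h
            have h6 : (4:ℤ) ≤ (K:ℤ) := by exact_mod_cast hK4
            omega
          have hprodeq : (∏ j, δ j) = -(-1:ℤ)^(t-1) := by
            rcases hprodval with h1 | h1 <;> rcases hεval with h2 | h2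
            · exfalso
              rw [h1, h2] at hprodK
              norm_num at hprodK
              exact hK2 hprodK
            · rw [h1, h2]; norm_num
            · rw [h1, h2]
            · exfalso
              rw [h1, h2] at hprodK
              refine hK2 ?_
              have h7 : (-1:ℤ) + -1 = -2 := by norm_num
              rw [h7] at hprodK
              exact (dvd_neg).mp hprodK
          set P := Finset.univ.filter (fun j => δ j = 1) with hPdef
          have hsum : P.card + (Finset.univ.filter (fun j => ¬ δ j = 1)).card = t := by
            rw [hPdef, Finset.card_filter_add_card_filter_not, Finset.card_univ,
              Fintype.card_fin]
          have hprodsplit : (∏ j, δ j) =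
              (-1:ℤ)^(Finset.univ.filter (fun j => ¬ δ j = 1)).card := by
            rw [← Finset.prod_filter_mul_prod_filter_not Finset.univ (fun j => δ j = 1) δ]
            rw [Finset.prod_eq_one (fun j hj => (Finset.mem_filter.mp hj).2), one_mul]
            rw [Finset.prod_congr rfl
              (fun j hj => (hδval j).resolve_left (Finset.mem_filter.mp hj).2),
              Finset.prod_const]
          have hteq : (-1:ℤ)^t = -(-1:ℤ)^(t-1) := by
            have h0 : (-1:ℤ)^t = (-1:ℤ)^(t-1) * (-1:ℤ)^1 := by
              rw [← pow_add]; congr 1; omega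
            rw [h0]; ring
          have hPeven : Even P.card := by
            have h2 : (-1:ℤ)^(P.card + (Finset.univ.filter (fun j => ¬ δ j = 1)).card)
                = -(-1:ℤ)^(t-1) := by rw [hsum, hteq]
            rw [pow_add, ← hprodsplit, hprodeq] at h2
            have hne : (-(-1:ℤ)^(t-1)) ≠ 0 := by
              rcases hεval with h | h <;> rw [h] <;> norm_num
            have h8 := mul_right_cancel₀ hne (h2.trans (one_mul _).symm)
            exact (neg_one_pow_eq_one_iff_even (by norm_num : (-1:ℤ) ≠ 1)).mp h8
          by_cases hiP : δ i = 1
          · have hiP' : i ∈ P := Finset.mem_filter.mpr ⟨Finset.mem_univ i, hiP⟩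
            have hc2 : 1 < P.card := by
              obtain ⟨r, hr⟩ := hPeven
              have h9 : 0 < P.card := Finset.card_pos.mpr ⟨i, hiP'⟩
              omega
            obtain ⟨j, hjP, hji⟩ := Finset.exists_mem_ne hc2 i
            refine ⟨j, Finset.mem_erase.mpr ⟨hji, Finset.mem_univ j⟩, ?_⟩
            rw [show a = 1 + (a-1) by omega, pow_add, pow_one]
            exact mul_dvd_mul (hodd_add i (hodd i)) (hδ1 j (Finset.mem_filter.mp hjP).2)
          · have hdi : (2:ℤ)^(a-1) ∣ (p i:ℤ) + 1 := hδm1 i hiP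
            by_cases hPne : P.Nonempty
            · obtain ⟨j, hjP⟩ := hPne
              have hδj : δ j = 1 := (Finset.mem_filter.mp hjP).2
              have hji : j ≠ i := fun h => hiP (h ▸ hδj)
              refine ⟨j, Finset.mem_erase.mpr ⟨hji, Finset.mem_univ j⟩, ?_⟩
              refine dvd_trans (pow_dvd_pow 2 (by omega : a ≤ (a-1)+(a-1))) ?_
              rw [pow_add]
              exact mul_dvd_mul hdi (hδ1 j hδj)
            · obtain ⟨j, hj⟩ : (Finset.univ.erase i).Nonempty :=
                Finset.card_pos.mp (by omega)
              refine ⟨j, hj, ?_⟩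
              rw [show a = (a-1)+1 by omega, pow_add, pow_one]
              exact mul_dvd_mul hdi (hodd_sub j (hodd j))
      obtain ⟨j, hj, hdvdij⟩ := hex
      obtain ⟨k, hk, hkj⟩ := Finset.exists_mem_ne hcard2 j
      have hsplit : s = (((p i:ℤ)+1) * ((p j:ℤ)-1)) *
          (((p k:ℤ)-1) * ∏ l ∈ ((Finset.univ.erase i).erase j).erase k, ((p l:ℤ)-1)) := by
        rw [hsdef, ← Finset.mul_prod_erase _ _ hj,
          ← Finset.mul_prod_erase _ _ (Finset.mem_erase.mpr ⟨hkj, hk⟩)]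
        ring
      rw [hsplit, pow_succ]
      exact mul_dvd_mul hdvdij (Dvd.dvd.mul_right (hodd_sub k (hodd k)) _)
  -- assemble
  have hcop2 : IsCoprime ((2:ℤ)^(a+1)) ((m:ℕ):ℤ) := by
    have h1 : Nat.Coprime (2^(a+1)) m :=
      Nat.Coprime.pow_left _ ((Nat.Prime.coprime_iff_not_dvd Nat.prime_two).mpr hm2)
    have := Nat.isCoprime_iff_coprime.mpr h1
    push_cast at this; exact this
  have hfin : (2:ℤ)^(a+1) * ((m:ℕ):ℤ) ∣ s := hcop2.mul_dvd h2pow hms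
  have h2G : 2 * G = (2:ℤ)^(a+1) * ((m:ℕ):ℤ) := by
    rw [← hGn, ← hnm]
    push_cast
    ring
  rw [h2G]
  exact hfin
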